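/- For every odd positive integer k, T(k) = 2k - 1 - 2·∑_{d|k} d·φ(k/d), where φ is Euler's totient function. -/

import Mathlib

/-- `S(h,k) := ∑_{j=1}^{k-1} (-1)^{j+1+⌊hj/k⌋}` (here `h*j/k` is natural-number
division, which agrees with the floor of the rational `hj/k`). -/
def Tpair (h k : ℕ) : ℤ := ∑ j ∈ Finset.Icc 1 (2 * k - 1), (-1 : ℤ) ^ (j + 1 + h * j / k)

/-- `T(k) := ∑_{h=1}^{2k-1} T(h,k)`. -/
def Tsum (k : ℕ) : ℤ := ∑ h ∈ Finset.Icc 1 (2 * k - 1), Tpair h k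

/-- Pairing lemma: exponent parities at `j` and `2k-j` are opposite when `k ∤ h*j`. -/
lemma pair_term (h k j : ℕ) (hk : 0 < k) (hj1 : 1 ≤ j) (hj2 : j ≤ 2 * k - 1)
    (hnd : ¬ k ∣ h * j) :
    (-1 : ℤ) ^ ((2 * k - j) + 1 + h * (2 * k - j) / k) = -(-1 : ℤ) ^ (j + 1 + h * j / k) := by
  have hh : 0 < h := by
    rcases Nat.eq_zero_or_pos h with h0 | h0
    · exact absurd (by simp [h0]) hnd
    · exact h0
  set j' := 2 * k - j with hj'
  set q := h * j / k with hq
  set r := h * j % k with hr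
  set q' := h * j' / k with hq'
  set r' := h * j' % k with hr'
  have e1 : k * q + r = h * j := Nat.div_add_mod _ _
  have e2 : k * q' + r' = h * j' := Nat.div_add_mod _ _
  have hjj' : j + j' = 2 * k := by omega
  have e3 : h * j + h * j' = 2 * h * k := by
    rw [← Nat.mul_add, hjj']; ring
  have hr0 : r ≠ 0 := fun h0 => hnd (Nat.dvd_of_mod_eq_zero h0)
  have hrlt : r < k := Nat.mod_lt _ hk
  have hr'lt : r' < k := Nat.mod_lt _ hk
  have hr'0 : r' ≠ 0 := by
    intro h0
    have hd' : k ∣ h * j' := Nat.dvd_of_mod_eq_zero h0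
    have : k ∣ h * j := by
      have h2 : k ∣ 2 * h * k := ⟨2 * h, by ring⟩
      have := Nat.dvd_sub h2 hd'
      rwa [show 2 * h * k - h * j' = h * j by omega] at this
    exact hnd this
  -- derive q + q' = 2h - 1
  have key : (q : ℤ) + q' = 2 * h - 1 := by
    have E : (k : ℤ) * q + r + (k * q' + r') = 2 * h * k := by
      have := congrArg (fun n : ℕ => (n : ℤ)) (by rw [e1, e2, e3] : (k * q + r) + (k * q' + r') = 2 * h * k)
      push_cast at this; push_cast; linarith
    have hk' : (0 : ℤ) < k := by exact_mod_cast hk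
    have h1 : (0 : ℤ) < r + r' := by
      have : 0 < r := Nat.pos_of_ne_zero hr0
      positivity
    have h2 : (r : ℤ) + r' < 2 * k := by
      have := hrlt; have := hr'lt; push_cast; omega
    have hE2 : (r : ℤ) + r' = k * (2 * h - q - q') := by linarith
    have hc1 : (1 : ℤ) ≤ 2 * h - q - q' := by nlinarith
    have hc2 : (2 * (h:ℤ) - q - q') < 2 := by nlinarith
    linarith
  have keyn : q + q' = 2 * h - 1 := by omega
  -- now parity
  have hsum : (j + 1 + q) + (j' + 1 + q') = 2 * k + 2 * h + 1 := by omega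
  have hodd : Odd ((j + 1 + q) + (j' + 1 + q')) := by rw [hsum]; exact ⟨k + h, by ring⟩
  rcases Nat.even_or_odd (j + 1 + q) with he | ho
  · have ho' : Odd (j' + 1 + q') := by
      rw [Nat.odd_iff] at hodd ⊢; rw [Nat.even_iff] at he; omega
    rw [ho'.neg_one_pow, he.neg_one_pow]
  · have he' : Even (j' + 1 + q') := by
      rw [Nat.odd_iff] at hodd ho; rw [Nat.even_iff]; omega
    rw [he'.neg_one_pow, ho.neg_one_pow]; ring

lemma sum_neg_one_pow_succ (d : ℕ) (hd : 0 < d) :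
    ∑ m ∈ Finset.Icc 1 (2 * d - 1), (-1 : ℤ) ^ (m + 1) = 1 := by
  have hset : Finset.range (2 * d) = insert 0 (Finset.Icc 1 (2 * d - 1)) := by
    ext x
    simp only [Finset.mem_range, Finset.mem_insert, Finset.mem_Icc]
    omega
  have h0 : (0 : ℕ) ∉ Finset.Icc 1 (2 * d - 1) := by simp
  have htot : ∑ m ∈ Finset.range (2 * d), (-1 : ℤ) ^ (m + 1) = 0 := by
    have : ∑ m ∈ Finset.range (2 * d), (-1 : ℤ) ^ (m + 1)
        = (∑ m ∈ Finset.range (2 * d), (-1 : ℤ) ^ m) * (-1) := by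
      rw [Finset.sum_mul]
      apply Finset.sum_congr rfl
      intro m _
      rw [pow_succ]
    rw [this, neg_one_geom_sum, if_pos (by exact ⟨d, by ring⟩)]
    ring
  rw [hset, Finset.sum_insert h0] at htot
  norm_num at htot
  linarith

lemma Tpair_eq (h k : ℕ) (hk : 0 < k) (hodd : Odd k) :
    Tpair h k = if h % 2 = 1 then 1 - 2 * (Nat.gcd h k : ℤ) else 1 := by
  classical
  set d := Nat.gcd h k with hd
  have hdk : d ∣ k := Nat.gcd_dvd_right h k
  have hdh : d ∣ h := Nat.gcd_dvd_left h k
  have hdpos : 0 < d := Nat.gcd_pos_of_pos_right h hk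
  set c := k / d with hc
  have hcd : d * c = k := Nat.mul_div_cancel' hdk
  have hcpos : 0 < c := Nat.div_pos (Nat.le_of_dvd hk hdk) hdpos
  have hcodd : c % 2 = 1 := by
    rcases Nat.even_or_odd c with he | ho
    · exfalso
      have : Even k := by rw [← hcd]; exact he.mul_left d
      rw [Nat.even_iff] at this; rw [Nat.odd_iff] at hodd; omega
    · exact Nat.odd_iff.mp ho
  have hdodd : d % 2 = 1 := by
    rcases Nat.even_or_odd d with he | ho
    · exfalso
      have : Even k := by rw [← hcd]; exact he.mul_right c
      rw [Nat.even_iff] at this; rw [Nat.odd_iff] at hodd; omega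
    · exact Nat.odd_iff.mp ho
  have cop : Nat.Coprime (h / d) c := Nat.coprime_div_gcd_div_gcd hdpos
  have key : ∀ j, k ∣ h * j ↔ c ∣ j := by
    intro j
    constructor
    · intro hdvd
      have h1 : d * c ∣ d * ((h / d) * j) := by
        rw [hcd, ← Nat.mul_assoc, Nat.mul_div_cancel' hdh]; exact hdvd
      have h2 : c ∣ (h / d) * j := (mul_dvd_mul_iff_left (by omega : d ≠ 0)).mp h1
      exact cop.symm.dvd_of_dvd_mul_left h2
    · rintro ⟨m, rfl⟩
      refine ⟨(h / d) * m, ?_⟩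
      calc h * (c * m) = (d * (h / d)) * (c * m) := by rw [Nat.mul_div_cancel' hdh]
        _ = (d * c) * ((h / d) * m) := by ring
        _ = k * ((h / d) * m) := by rw [hcd]
  have val : ∀ m, h * (m * c) / k = m * (h / d) := by
    intro m
    have heq : h * (m * c) = m * (h / d) * k := by
      calc h * (m * c) = (d * (h / d)) * (m * c) := by rw [Nat.mul_div_cancel' hdh]
        _ = m * (h / d) * (d * c) := by ring
        _ = m * (h / d) * k := by rw [hcd]
    rw [heq, Nat.mul_div_cancel _ hk]
  rw [Tpair, ← Finset.sum_filter_add_sum_filter_not (Finset.Icc 1 (2 * k - 1)) (fun j => k ∣ h * j)]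
  have hzero : ∑ j ∈ (Finset.Icc 1 (2 * k - 1)).filter (fun j => ¬ k ∣ h * j),
      (-1 : ℤ) ^ (j + 1 + h * j / k) = 0 := by
    apply Finset.sum_involution (fun a _ => 2 * k - a)
    · intro a ha
      simp only [Finset.mem_filter, Finset.mem_Icc] at ha
      rw [pair_term h k a hk ha.1.1 ha.1.2 ha.2]; ring
    · intro a ha _
      simp only [Finset.mem_filter, Finset.mem_Icc] at ha
      intro hcontra
      have : a = k := by omega
      subst this
      exact ha.2 ⟨h, by ring⟩
    · intro a ha
      simp only [Finset.mem_filter, Finset.mem_Icc] at ha ⊢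
      refine ⟨⟨by omega, by omega⟩, ?_⟩
      intro hdvd
      apply ha.2
      have h2 : k ∣ 2 * h * k := ⟨2 * h, by ring⟩
      have hle : h * a ≤ 2 * h * k := by
        calc h * a ≤ h * (2 * k) := Nat.mul_le_mul_left h (by omega)
        _ = 2 * h * k := by ring
      have heq : h * (2 * k - a) = 2 * h * k - h * a := by
        rw [Nat.mul_sub]; ring_nf
      rw [heq] at hdvd
      have := Nat.dvd_sub h2 hdvd
      rwa [show 2 * h * k - (2 * h * k - h * a) = h * a by omega] at this
    · intro a ha
      simp only [Finset.mem_filter, Finset.mem_Icc] at ha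
      omega
  rw [hzero, add_zero]
  have hre : ∑ j ∈ (Finset.Icc 1 (2 * k - 1)).filter (fun j => k ∣ h * j),
      (-1 : ℤ) ^ (j + 1 + h * j / k)
      = ∑ m ∈ Finset.Icc 1 (2 * d - 1), (-1 : ℤ) ^ (m * c + 1 + m * (h / d)) := by
    apply Finset.sum_nbij' (fun j => j / c) (fun m => m * c)
    · intro a ha
      simp only [Finset.mem_filter, Finset.mem_Icc] at ha
      obtain ⟨m, rfl⟩ := (key a).mp ha.2
      rw [Nat.mul_div_cancel_left _ hcpos]
      simp only [Finset.mem_Icc]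
      constructor
      · rcases Nat.eq_zero_or_pos m with h0 | h0
        · exfalso; rw [h0, Nat.mul_zero] at ha; omega
        · omega
      · have : c * m < c * (2 * d) := by
          have h1 : c * m ≤ 2 * k - 1 := ha.1.2
          have : c * (2 * d) = 2 * k := by rw [← hcd]; ring
          omega
        have := Nat.lt_of_mul_lt_mul_left this
        omega
    · intro m hm
      simp only [Finset.mem_Icc] at hm
      simp only [Finset.mem_filter, Finset.mem_Icc]
      refine ⟨⟨?_, ?_⟩, (key _).mpr ⟨m, by ring⟩⟩
      · have : 1 * 1 ≤ m * c := Nat.mul_le_mul hm.1 hcpos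
        omega
      · have : m * c ≤ (2 * d - 1) * c := Nat.mul_le_mul_right c hm.2
        have h2 : (2 * d - 1) * c = 2 * k - c := by
          rw [Nat.sub_mul, ← hcd]; ring_nf
        omega
    · intro a ha
      simp only [Finset.mem_filter] at ha
      obtain ⟨m, rfl⟩ := (key a).mp ha.2
      rw [Nat.mul_div_cancel_left _ hcpos, Nat.mul_comm]
    · intro m _
      rw [Nat.mul_div_cancel _ hcpos]
    · intro a ha
      simp only [Finset.mem_filter] at ha
      obtain ⟨m, rfl⟩ := (key a).mp ha.2
      rw [Nat.mul_div_cancel_left _ hcpos, Nat.mul_comm c m, val m]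
  rw [hre]
  obtain ⟨a, hca⟩ : ∃ a, c = 2 * a + 1 := ⟨c / 2, by omega⟩
  rcases Nat.eq_zero_or_pos h with hzeroh | hposh
  · -- h = 0 : even case with h/d = 0
    subst hzeroh
    simp only [Nat.zero_div, Nat.zero_mod]
    norm_num
    calc ∑ m ∈ Finset.Icc 1 (2 * d - 1), (-1 : ℤ) ^ (m * c + 1 + m * 0)
        = ∑ m ∈ Finset.Icc 1 (2 * d - 1), (-1 : ℤ) ^ (m + 1) := by
          apply Finset.sum_congr rfl
          intro m _
          rw [show m * c + 1 + m * 0 = (m + 1) + 2 * (m * a) by rw [hca]; ring,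
            pow_add, pow_mul, neg_one_sq, one_pow, mul_one]
      _ = 1 := sum_neg_one_pow_succ d hdpos
  rcases eq_or_ne (h % 2) 1 with hpar | hpar
  · -- h odd
    rw [if_pos hpar]
    obtain ⟨b, hb⟩ : ∃ b, h / d = 2 * b + 1 := by
      have : h = d * (h / d) := (Nat.mul_div_cancel' hdh).symm
      rcases Nat.even_or_odd (h / d) with he | ho
      · exfalso
        have : Even h := by rw [this]; exact he.mul_left d
        rw [Nat.even_iff] at this; omega
      · rw [Nat.odd_iff] at ho; exact ⟨(h/d) / 2, by omega⟩
    have : ∀ m ∈ Finset.Icc 1 (2 * d - 1), (-1 : ℤ) ^ (m * c + 1 + m * (h / d)) = -1 := by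
      intro m _
      have : Odd (m * c + 1 + m * (h / d)) := ⟨m * a + m * b + m, by rw [hca, hb]; ring⟩
      exact this.neg_one_pow
    rw [Finset.sum_congr rfl this, Finset.sum_const, Nat.card_Icc]
    have : (2 * d - 1 + 1 - 1 : ℕ) = 2 * d - 1 := by omega
    rw [this]
    have hcast : ((2 * d - 1 : ℕ) : ℤ) = 2 * d - 1 := by
      push_cast [Nat.cast_sub (by omega : 1 ≤ 2 * d)]; ring
    simp only [nsmul_eq_mul, hcast]; ring
  · -- h even
    rw [if_neg hpar]
    obtain ⟨b, hb⟩ : ∃ b, h / d = 2 * b := by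
      have hh : h = d * (h / d) := (Nat.mul_div_cancel' hdh).symm
      rcases Nat.even_or_odd (h / d) with he | ho
      · rw [Nat.even_iff] at he; exact ⟨(h/d)/2, by omega⟩
      · exfalso
        have : Odd h := by
          rw [hh]; exact (Nat.odd_iff.mpr hdodd).mul ho
        rw [Nat.odd_iff] at this; omega
    calc ∑ m ∈ Finset.Icc 1 (2 * d - 1), (-1 : ℤ) ^ (m * c + 1 + m * (h / d))
        = ∑ m ∈ Finset.Icc 1 (2 * d - 1), (-1 : ℤ) ^ (m + 1) := by
          apply Finset.sum_congr rfl
          intro m _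
          rw [show m * c + 1 + m * (h / d) = (m + 1) + 2 * (m * a + m * b) by
            rw [hca, hb]; ring, pow_add, pow_mul, neg_one_sq, one_pow, mul_one]
      _ = 1 := sum_neg_one_pow_succ d hdpos

/-- Count of multiples of `e` below `k`, for `e ∣ k`. -/
lemma card_multiples_lt (k e : ℕ) (hk : 0 < k) (he : e ∣ k) (hepos : 0 < e) :
    ((Finset.range k).filter (fun r => e ∣ r)).card = k / e := by
  have himg : (Finset.range k).filter (fun r => e ∣ r)
      = (Finset.range (k / e)).image (fun t => t * e) := by
    ext r
    simp only [Finset.mem_filter, Finset.mem_range, Finset.mem_image]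
    constructor
    · rintro ⟨hrk, t, rfl⟩
      refine ⟨t, ?_, by ring⟩
      have : t * e < (k / e) * e := by
        calc t * e = e * t := Nat.mul_comm t e
          _ < k := hrk
          _ = (k / e) * e := (Nat.div_mul_cancel he).symm
      exact Nat.lt_of_mul_lt_mul_right this
    · rintro ⟨t, ht, rfl⟩
      constructor
      · calc t * e < (k / e) * e := (Nat.mul_lt_mul_right hepos).mpr ht
          _ = k := Nat.div_mul_cancel he
      · exact ⟨t, Nat.mul_comm t e⟩
  rw [himg, Finset.card_image_of_injective _ (fun a b hab => by
    exact Nat.eq_of_mul_eq_mul_right hepos hab), Finset.card_range]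

/-- `∑_{r<k} gcd(r,k) = ∑_{d ∣ k} d·φ(k/d)`. -/
lemma sum_gcd_eq (k : ℕ) (hk : 0 < k) :
    ∑ r ∈ Finset.range k, Nat.gcd r k = ∑ d ∈ k.divisors, d * Nat.totient (k / d) := by
  have step1 : ∀ r, Nat.gcd r k = ∑ e ∈ k.divisors.filter (· ∣ r), Nat.totient e := by
    intro r
    have hg : Nat.gcd r k ≠ 0 := Nat.gcd_ne_zero_right (by omega)
    have hdiveq : (Nat.gcd r k).divisors = k.divisors.filter (· ∣ r) := by
      ext e
      simp only [Nat.mem_divisors, Finset.mem_filter]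
      constructor
      · intro ⟨hdvd, _⟩
        exact ⟨⟨(Nat.dvd_gcd_iff.mp hdvd).2, by omega⟩, (Nat.dvd_gcd_iff.mp hdvd).1⟩
      · intro ⟨⟨hek, _⟩, her⟩
        exact ⟨Nat.dvd_gcd her hek, hg⟩
    rw [← hdiveq, Nat.sum_totient]
  calc ∑ r ∈ Finset.range k, Nat.gcd r k
      = ∑ r ∈ Finset.range k, ∑ e ∈ k.divisors, if e ∣ r then Nat.totient e else 0 := by
        apply Finset.sum_congr rfl
        intro r _
        rw [step1 r, Finset.sum_filter]
    _ = ∑ e ∈ k.divisors, ∑ r ∈ Finset.range k, if e ∣ r then Nat.totient e else 0 :=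
        Finset.sum_comm
    _ = ∑ e ∈ k.divisors, Nat.totient e * (k / e) := by
        apply Finset.sum_congr rfl
        intro e he
        rw [Nat.mem_divisors] at he
        rw [← Finset.sum_filter, Finset.sum_const, smul_eq_mul,
          card_multiples_lt k e hk he.1 (Nat.pos_of_dvd_of_pos he.1 hk), Nat.mul_comm]
    _ = ∑ d ∈ k.divisors, d * Nat.totient (k / d) := by
        rw [← Nat.sum_div_divisors k (fun d => d * Nat.totient (k / d))]
        apply Finset.sum_congr rfl
        intro e he
        rw [Nat.mem_divisors] at he
        rw [Nat.div_div_self he.1 (by omega), Nat.mul_comm]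

/-- The odd numbers in `[1, 2k-1]` form a complete residue system mod odd `k`. -/
lemma sum_gcd_odd (k : ℕ) (hk : 0 < k) (hodd : Odd k) :
    ∑ h ∈ (Finset.Icc 1 (2 * k - 1)).filter (fun h => h % 2 = 1), (Nat.gcd h k : ℤ)
      = ∑ r ∈ Finset.range k, (Nat.gcd r k : ℤ) := by
  have hk2 : k % 2 = 1 := Nat.odd_iff.mp hodd
  apply Finset.sum_nbij' (fun h => h % k) (fun r => if r % 2 = 1 then r else r + k)
  · intro a ha
    exact Finset.mem_range.mpr (Nat.mod_lt _ hk)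
  · intro r hr
    rw [Finset.mem_range] at hr
    simp only [Finset.mem_filter, Finset.mem_Icc]
    split_ifs with h2
    · exact ⟨⟨by omega, by omega⟩, h2⟩
    · exact ⟨⟨by omega, by omega⟩, by omega⟩
  · intro a ha
    simp only [Finset.mem_filter, Finset.mem_Icc] at ha
    rcases Nat.lt_or_ge a k with hlt | hge
    · rw [Nat.mod_eq_of_lt hlt, if_pos ha.2]
    · have hma : a % k = a - k := by
        rw [Nat.mod_eq_sub_mod hge, Nat.mod_eq_of_lt (by omega)]
      rw [hma, if_neg (by omega)]
      omega
  · intro r hr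
    rw [Finset.mem_range] at hr
    split_ifs with h2
    · exact Nat.mod_eq_of_lt hr
    · rw [Nat.add_mod_right, Nat.mod_eq_of_lt hr]
  · intro a ha
    have : Nat.gcd (a % k) k = Nat.gcd a k := by
      rw [← Nat.gcd_rec, Nat.gcd_comm]
    rw [this]

theorem stmt_0 (k : ℕ) (hk : 0 < k) (hodd : Odd k) :
    Tsum k = 2 * (k : ℤ) - 1 -
      2 * ∑ d ∈ k.divisors, (d : ℤ) * (Nat.totient (k / d) : ℤ) := by

  rw [Tsum]
  have h1 : ∑ h ∈ Finset.Icc 1 (2 * k - 1), Tpair h k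
      = ∑ h ∈ Finset.Icc 1 (2 * k - 1),
          ((1 : ℤ) - if h % 2 = 1 then 2 * (Nat.gcd h k : ℤ) else 0) := by
    apply Finset.sum_congr rfl
    intro h _
    rw [Tpair_eq h k hk hodd]
    split_ifs <;> ring
  rw [h1, Finset.sum_sub_distrib, Finset.sum_const, Nat.card_Icc]
  have hcard : (2 * k - 1 + 1 - 1 : ℕ) = 2 * k - 1 := by omega
  rw [hcard]
  have h2 : ∑ h ∈ Finset.Icc 1 (2 * k - 1),
      (if h % 2 = 1 then 2 * (Nat.gcd h k : ℤ) else 0)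
      = 2 * ∑ h ∈ (Finset.Icc 1 (2 * k - 1)).filter (fun h => h % 2 = 1),
          (Nat.gcd h k : ℤ) := by
    rw [Finset.mul_sum, Finset.sum_filter]
  rw [h2, sum_gcd_odd k hk hodd]
  have h3 : ∑ r ∈ Finset.range k, (Nat.gcd r k : ℤ)
      = ∑ d ∈ k.divisors, (d : ℤ) * (Nat.totient (k / d) : ℤ) := by
    have := congrArg (fun n : ℕ => (n : ℤ)) (sum_gcd_eq k hk)
    push_cast at this
    exact this
  rw [h3]
  have hcast : ((2 * k - 1 : ℕ) : ℤ) = 2 * k - 1 := by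
    push_cast [Nat.cast_sub (by omega : 1 ≤ 2 * k)]; ring
  simp only [nsmul_eq_mul, hcast, mul_one]
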